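/- If α, γ > 0, 0 < α/γ < d, x ∈ [0, d] and a ∈ [0, d], then the path f⋆(t), given as the convex combination q(t)·a + (e^{-γt} - q(t)e^{-γT})·x + (1 - e^{-γt} - q(t)(1 - e^{-γT}))·(α/γ) with q(t) = sinh(γt)/sinh(γT), satisfies 0 ≤ f⋆(t) ≤ d for all t ∈ [0,T]. -/

import Mathlib

noncomputable def qcoef (γ T t : ℝ) : ℝ := Real.sinh (γ * t) / Real.sinh (γ * T)

private lemma convex3_mem_Icc (c1 c2 c3 a x y d : ℝ) (h1 : 0 ≤ c1) (h2 : 0 ≤ c2)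
    (h3 : 0 ≤ c3) (hs : c1 + c2 + c3 = 1) (ha0 : 0 ≤ a) (had : a ≤ d)
    (hx0 : 0 ≤ x) (hxd : x ≤ d) (hy0 : 0 ≤ y) (hyd : y ≤ d) :
    c1 * a + c2 * x + c3 * y ∈ Set.Icc 0 d := by
  constructor
  · have := mul_nonneg h1 ha0
    have := mul_nonneg h2 hx0
    have := mul_nonneg h3 hy0
    linarith
  · nlinarith [mul_nonneg h1 (sub_nonneg.mpr had), mul_nonneg h2 (sub_nonneg.mpr hxd),
      mul_nonneg h3 (sub_nonneg.mpr hyd)]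

/-- If α, γ > 0, 0 < α/γ < d, x ∈ [0,d] and a ∈ [0,d], then the convex-combination
path f⋆(t) lies in [0,d] for all t ∈ [0,T]. -/
theorem stmt_11 (α γ d T x a : ℝ) (hα : 0 < α) (hγ : 0 < γ) (hd : α / γ < d)
    (hT : 0 < T) (hx : x ∈ Set.Icc 0 d) (ha : a ∈ Set.Icc 0 d)
    (t : ℝ) (ht : 0 ≤ t) (htT : t ≤ T) :
    qcoef γ T t * a + (Real.exp (-γ * t) - qcoef γ T t * Real.exp (-γ * T)) * x +
        (1 - Real.exp (-γ * t) - qcoef γ T t * (1 - Real.exp (-γ * T))) * (α / γ)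
      ∈ Set.Icc 0 d := by
  obtain ⟨hx0, hxd⟩ := hx
  obtain ⟨ha0, had⟩ := ha
  have hγT : 0 < γ * T := mul_pos hγ hT
  have hs : 0 < Real.sinh (γ * T) := Real.sinh_pos_iff.mpr hγT
  set u := Real.exp (γ * t) with hu_def
  set v := Real.exp (γ * T) with hv_def
  have hu : 0 < u := Real.exp_pos _
  have hv : 0 < v := Real.exp_pos _
  have hu1 : 1 ≤ u := Real.one_le_exp (mul_nonneg hγ.le ht)
  have hv1 : 1 ≤ v := Real.one_le_exp hγT.le
  have huv : u ≤ v := Real.exp_le_exp.mpr (by nlinarith)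
  have hsinht : Real.sinh (γ * t) = (u - u⁻¹) / 2 := by
    rw [Real.sinh_eq, Real.exp_neg]
  have hsinhT : Real.sinh (γ * T) = (v - v⁻¹) / 2 := by
    rw [Real.sinh_eq, Real.exp_neg]
  have hent : Real.exp (-γ * t) = u⁻¹ := by rw [neg_mul, Real.exp_neg]
  have henT : Real.exp (-γ * T) = v⁻¹ := by rw [neg_mul, Real.exp_neg]
  have hsT : (0:ℝ) < (v - v⁻¹) / 2 := by rw [← hsinhT]; exact hs
  have hq0 : 0 ≤ qcoef γ T t :=
    div_nonneg (Real.sinh_nonneg_iff.mpr (mul_nonneg hγ.le ht)) hs.le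
  have hq1 : qcoef γ T t ≤ 1 := by
    rw [qcoef, div_le_one hs]
    exact Real.sinh_le_sinh.mpr (by nlinarith)
  have h2 : 0 ≤ Real.exp (-γ * t) - qcoef γ T t * Real.exp (-γ * T) := by
    rw [hent, henT, qcoef, hsinht, hsinhT, sub_nonneg, div_mul_eq_mul_div,
      div_le_iff₀ hsT]
    have h1 : u * u ≤ v * v := by nlinarith
    have key : (u - u⁻¹) * v⁻¹ ≤ u⁻¹ * (v - v⁻¹) := by
      rw [← sub_nonneg]
      have e1 : u⁻¹ * (v - v⁻¹) - (u - u⁻¹) * v⁻¹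
          = (v * v - u * u) * (u⁻¹ * v⁻¹) := by
        field_simp; ring
      rw [e1]
      exact mul_nonneg (by nlinarith) (by positivity)
    linarith
  have h3 : 0 ≤ 1 - Real.exp (-γ * t) - qcoef γ T t * (1 - Real.exp (-γ * T)) := by
    rw [hent, henT, qcoef, hsinht, hsinhT, sub_nonneg, div_mul_eq_mul_div,
      div_le_iff₀ hsT]
    have key : 0 ≤ (u - 1) * (v - 1) * (v - u) := by
      apply mul_nonneg (mul_nonneg (by linarith) (by linarith)) (by linarith)
    have e1 : (1 - u⁻¹) * ((v - v⁻¹) / 2) - (u - u⁻¹) / 2 * (1 - v⁻¹)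
        = (u - 1) * (v - 1) * (v - u) * (u⁻¹ * v⁻¹) / 2 := by
      field_simp; ring
    have hnn : 0 ≤ (u - 1) * (v - 1) * (v - u) * (u⁻¹ * v⁻¹) / 2 :=
      div_nonneg (mul_nonneg key (by positivity)) (by norm_num)
    linarith
  have hαγ0 : 0 ≤ α / γ := (div_pos hα hγ).le
  have hαγd : α / γ ≤ d := hd.le
  exact convex3_mem_Icc _ _ _ _ _ _ _ hq0 h2 h3 (by ring) ha0 had hx0 hxd hαγ0 hαγd
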